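/- In the ring R = ℤ[1/2][s^{±1}, t^{±1}, (s+t)^{−1}] (the localization of ℤ[s,t] at 2, s, t, and s+t), every unit has the form ±2^i s^j t^k (s+t)^l for integers i, j, k, l. -/

import Mathlib

open MvPolynomial

/-- The polynomial ring ℤ[s,t]. -/
abbrev PolyST : Type := MvPolynomial (Fin 2) ℤ

/-- The multiplicative set generated by `2, s, t, s+t` in ℤ[s,t]. -/
noncomputable def Mst : Submonoid PolyST :=
  Submonoid.closure {2, X 0, X 1, X 0 + X 1}

/-- The ring `Λ_J = ℤ[1/2, s^{±1}, t^{±1}, (s+t)^{−1}]`. -/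
abbrev LambdaJ : Type := Localization Mst

lemma prime_two' : Prime (2 : PolyST) := by
  have h : (2 : PolyST) = C 2 := by simp
  rw [h, MvPolynomial.prime_C_iff]
  exact Int.prime_two

lemma prime_X0 : Prime (X 0 : PolyST) := by
  rw [← MulEquiv.prime_iff (finSuccEquiv ℤ 1).toMulEquiv]
  have : (finSuccEquiv ℤ 1).toMulEquiv (X 0) = Polynomial.X := by
    simp [finSuccEquiv_X_zero]
  rw [this]
  exact Polynomial.prime_X

lemma prime_X1 : Prime (X 1 : PolyST) := by
  have h := prime_X0
  rw [← MulEquiv.prime_iff (renameEquiv ℤ (Equiv.swap (0 : Fin 2) 1)).toMulEquiv] at h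
  have h2 : (renameEquiv ℤ (Equiv.swap (0 : Fin 2) 1)).toMulEquiv (X 0) = (X 1 : PolyST) := by
    simp
  rwa [h2] at h

noncomputable def shear : PolyST ≃ₐ[ℤ] PolyST :=
  AlgEquiv.ofAlgHom
    (aeval ![X 0 + X 1, X 1])
    (aeval ![X 0 - X 1, X 1])
    (by apply MvPolynomial.algHom_ext; intro i; fin_cases i <;> simp)
    (by apply MvPolynomial.algHom_ext; intro i; fin_cases i <;> simp)

lemma prime_X01 : Prime (X 0 + X 1 : PolyST) := by
  have h := prime_X0
  rw [← MulEquiv.prime_iff shear.toMulEquiv] at h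
  have h2 : shear.toMulEquiv (X 0) = (X 0 + X 1 : PolyST) := by
    simp [shear]
  rwa [h2] at h

lemma mv_unit : ∀ {n : ℕ} (p : MvPolynomial (Fin n) ℤ), IsUnit p → p = 1 ∨ p = -1 := by
  intro n
  induction n with
  | zero =>
    intro p hp
    have e := MvPolynomial.isEmptyRingEquiv ℤ (Fin 0)
    have h1 : IsUnit (e p) := hp.map e
    rcases Int.isUnit_iff.mp h1 with h | h
    · left; apply e.injective; simpa using h
    · right; apply e.injective; simpa using h
  | succ n IH =>
    intro p hp
    set e := finSuccEquiv ℤ n with he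
    have h1 : IsUnit (e p) := hp.map e
    obtain ⟨r, hr, hCr⟩ := Polynomial.isUnit_iff.mp h1
    rcases IH r hr with rfl | rfl
    · left; apply e.injective; rw [map_one, ← hCr, map_one]
    · right; apply e.injective; rw [map_neg, map_one, ← hCr, map_neg, map_one]

lemma mst_elem {m : PolyST} (hm : m ∈ Mst) :
    ∃ i j k l : ℕ, m = 2 ^ i * X 0 ^ j * X 1 ^ k * (X 0 + X 1) ^ l := by
  induction hm using Submonoid.closure_induction with
  | mem x hx =>
    rcases hx with rfl | rfl | rfl | rfl
    · exact ⟨1, 0, 0, 0, by ring⟩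
    · exact ⟨0, 1, 0, 0, by ring⟩
    · exact ⟨0, 0, 1, 0, by ring⟩
    · exact ⟨0, 0, 0, 1, by ring⟩
  | one => exact ⟨0, 0, 0, 0, by ring⟩
  | mul x y _ _ hx hy =>
    obtain ⟨i, j, k, l, rfl⟩ := hx
    obtain ⟨i', j', k', l', rfl⟩ := hy
    exact ⟨i + i', j + j', k + k', l + l', by ring⟩

lemma Mst_le : Mst ≤ nonZeroDivisors PolyST := by
  rw [Mst]
  apply Submonoid.closure_le.mpr
  intro x hx
  rcases hx with rfl | rfl | rfl | rfl
  · exact mem_nonZeroDivisors_of_ne_zero two_ne_zero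
  · exact mem_nonZeroDivisors_of_ne_zero (X_ne_zero _)
  · exact mem_nonZeroDivisors_of_ne_zero (X_ne_zero _)
  · apply mem_nonZeroDivisors_of_ne_zero
    intro h
    apply_fun eval (fun _ => (1 : ℤ)) at h
    simp at h

lemma step {p rest a : PolyST} (hp : Prime p) (h : a ∣ p * rest) :
    a ∣ rest ∨ ∃ c, a = p * c ∧ c ∣ rest := by
  obtain ⟨b, hb⟩ := h
  have hpab : p ∣ a * b := ⟨rest, hb.symm⟩
  rcases hp.2.2 a b hpab with ⟨c, rfl⟩ | ⟨c, rfl⟩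
  · right
    refine ⟨c, rfl, b, ?_⟩
    have := hb
    rw [mul_assoc] at this
    exact mul_left_cancel₀ hp.ne_zero this
  · left
    refine ⟨c, ?_⟩
    apply mul_left_cancel₀ hp.ne_zero
    calc p * rest = a * (p * c) := hb
    _ = p * (a * c) := by ring

lemma key : ∀ (n i j k l : ℕ) (a : PolyST), i + j + k + l ≤ n →
    a ∣ 2 ^ i * X 0 ^ j * X 1 ^ k * (X 0 + X 1) ^ l →
    ∃ i' j' k' l' : ℕ,
      a = 2 ^ i' * X 0 ^ j' * X 1 ^ k' * (X 0 + X 1) ^ l' ∨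
      a = -(2 ^ i' * X 0 ^ j' * X 1 ^ k' * (X 0 + X 1) ^ l') := by
  intro n
  induction n with
  | zero =>
    intro i j k l a hn hd
    obtain ⟨rfl, rfl, rfl, rfl⟩ : i = 0 ∧ j = 0 ∧ k = 0 ∧ l = 0 := by omega
    simp only [pow_zero, mul_one, one_mul] at hd
    rcases mv_unit a (isUnit_of_dvd_one hd) with rfl | rfl
    · exact ⟨0, 0, 0, 0, Or.inl (by ring)⟩
    · exact ⟨0, 0, 0, 0, Or.inr (by ring)⟩
  | succ n IH =>
    intro i j k l a hn hd
    rcases i with _ | i0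
    · rcases j with _ | j0
      · rcases k with _ | k0
        · rcases l with _ | l0
          · simp only [pow_zero, mul_one, one_mul] at hd
            rcases mv_unit a (isUnit_of_dvd_one hd) with rfl | rfl
            · exact ⟨0, 0, 0, 0, Or.inl (by ring)⟩
            · exact ⟨0, 0, 0, 0, Or.inr (by ring)⟩
          · rw [show (2 : PolyST) ^ 0 * X 0 ^ 0 * X 1 ^ 0 * (X 0 + X 1) ^ (l0 + 1) =
              (X 0 + X 1) * (2 ^ 0 * X 0 ^ 0 * X 1 ^ 0 * (X 0 + X 1) ^ l0) from by ring] at hd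
            rcases step prime_X01 hd with h | ⟨c, rfl, hc⟩
            · exact IH 0 0 0 l0 a (by omega) h
            · obtain ⟨i', j', k', l', hc'⟩ := IH 0 0 0 l0 c (by omega) hc
              refine ⟨i', j', k', l' + 1, ?_⟩
              rcases hc' with rfl | rfl
              · left; ring
              · right; ring
        · rw [show (2 : PolyST) ^ 0 * X 0 ^ 0 * X 1 ^ (k0 + 1) * (X 0 + X 1) ^ l =
            X 1 * (2 ^ 0 * X 0 ^ 0 * X 1 ^ k0 * (X 0 + X 1) ^ l) from by ring] at hd
          rcases step prime_X1 hd with h | ⟨c, rfl, hc⟩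
          · exact IH 0 0 k0 l a (by omega) h
          · obtain ⟨i', j', k', l', hc'⟩ := IH 0 0 k0 l c (by omega) hc
            refine ⟨i', j', k' + 1, l', ?_⟩
            rcases hc' with rfl | rfl
            · left; ring
            · right; ring
      · rw [show (2 : PolyST) ^ 0 * X 0 ^ (j0 + 1) * X 1 ^ k * (X 0 + X 1) ^ l =
          X 0 * (2 ^ 0 * X 0 ^ j0 * X 1 ^ k * (X 0 + X 1) ^ l) from by ring] at hd
        rcases step prime_X0 hd with h | ⟨c, rfl, hc⟩
        · exact IH 0 j0 k l a (by omega) h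
        · obtain ⟨i', j', k', l', hc'⟩ := IH 0 j0 k l c (by omega) hc
          refine ⟨i', j' + 1, k', l', ?_⟩
          rcases hc' with rfl | rfl
          · left; ring
          · right; ring
    · rw [show (2 : PolyST) ^ (i0 + 1) * X 0 ^ j * X 1 ^ k * (X 0 + X 1) ^ l =
        2 * (2 ^ i0 * X 0 ^ j * X 1 ^ k * (X 0 + X 1) ^ l) from by ring] at hd
      rcases step prime_two' hd with h | ⟨c, rfl, hc⟩
      · exact IH i0 j k l a (by omega) h
      · obtain ⟨i', j', k', l', hc'⟩ := IH i0 j k l c (by omega) hc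
        refine ⟨i' + 1, j', k', l', ?_⟩
        rcases hc' with rfl | rfl
        · left; ring
        · right; ring

/-- Every unit of `Λ_J = ℤ[1/2, s^{±1}, t^{±1}, (s+t)^{−1}]` has the form
`±2^i s^j t^k (s+t)^l` with `i, j, k, l ∈ ℤ`. -/
theorem lambdaJ_units
    (h2 : IsUnit (algebraMap PolyST LambdaJ 2))
    (hs : IsUnit (algebraMap PolyST LambdaJ (X 0)))
    (ht : IsUnit (algebraMap PolyST LambdaJ (X 1)))
    (hst : IsUnit (algebraMap PolyST LambdaJ (X 0 + X 1))) :
    ∀ u : LambdaJˣ, ∃ i j k l : ℤ,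
      u = h2.unit ^ i * hs.unit ^ j * ht.unit ^ k * hst.unit ^ l ∨
      u = -(h2.unit ^ i * hs.unit ^ j * ht.unit ^ k * hst.unit ^ l) := by
  intro u
  set φ := algebraMap PolyST LambdaJ with hφ
  have inj : Function.Injective φ := IsLocalization.injective LambdaJ Mst_le
  -- the units P i j k l with value φ(2^i s^j t^k (s+t)^l)
  set P : ℕ → ℕ → ℕ → ℕ → LambdaJˣ := fun i j k l =>
    h2.unit ^ i * hs.unit ^ j * ht.unit ^ k * hst.unit ^ l with hP
  have valP : ∀ i j k l, (P i j k l : LambdaJ) =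
      φ (2 ^ i * X 0 ^ j * X 1 ^ k * (X 0 + X 1) ^ l) := by
    intro i j k l
    simp only [hP, Units.val_mul, Units.val_pow_eq_pow_val, IsUnit.unit_spec, map_mul, map_pow]
  -- write u = φ a / φ m
  obtain ⟨⟨a, m⟩, hu⟩ := IsLocalization.surj Mst (u : LambdaJ)
  -- φ a is a unit
  have ha : IsUnit (φ a) := by
    rw [← hu]
    exact u.isUnit.mul (IsLocalization.map_units LambdaJ m)
  -- hence a divides an element of Mst
  obtain ⟨v, hv⟩ := ha.exists_right_inv
  obtain ⟨⟨b, m'⟩, hv'⟩ := IsLocalization.surj Mst v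
  have hab : a * b = (m' : PolyST) := by
    apply inj
    rw [map_mul]
    calc φ a * φ b = φ a * (v * φ (m' : PolyST)) := by rw [hv']
    _ = (φ a * v) * φ (m' : PolyST) := by ring
    _ = φ (m' : PolyST) := by rw [hv, one_mul]
  obtain ⟨i1, j1, k1, l1, hm'⟩ := mst_elem m'.2
  have hdvd : a ∣ 2 ^ i1 * X 0 ^ j1 * X 1 ^ k1 * (X 0 + X 1) ^ l1 := by
    rw [← hm']; exact ⟨b, hab.symm⟩
  obtain ⟨i2, j2, k2, l2, ha2⟩ := key (i1 + j1 + k1 + l1) i1 j1 k1 l1 a le_rfl hdvd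
  obtain ⟨i3, j3, k3, l3, hm⟩ := mst_elem m.2
  -- value of φ m as a unit
  have hm_val : φ (m : PolyST) = (P i3 j3 k3 l3 : LambdaJ) := by rw [valP, hm]
  refine ⟨(i2 : ℤ) - i3, (j2 : ℤ) - j3, (k2 : ℤ) - k3, (l2 : ℤ) - l3, ?_⟩
  have hzpow : h2.unit ^ ((i2 : ℤ) - i3) * hs.unit ^ ((j2 : ℤ) - j3) *
      ht.unit ^ ((k2 : ℤ) - k3) * hst.unit ^ ((l2 : ℤ) - l3) =
      P i2 j2 k2 l2 * (P i3 j3 k3 l3)⁻¹ := by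
    simp only [hP, zpow_sub, zpow_natCast, div_eq_mul_inv, mul_inv]
    ring_nf
    rw [mul_inv_rev, mul_inv_rev, mul_inv_rev]
    apply Units.ext
    simp only [Units.val_mul]
    ring
  rcases ha2 with ha2 | ha2
  · left
    have hu' : u * P i3 j3 k3 l3 = P i2 j2 k2 l2 := by
      apply Units.ext
      rw [Units.val_mul, ← hm_val, hu, valP, ha2]
    rw [hzpow, ← hu']
    group
  · right
    have hu' : u * P i3 j3 k3 l3 = -P i2 j2 k2 l2 := by
      apply Units.ext
      rw [Units.val_mul, ← hm_val, hu, Units.val_neg, valP, ha2, map_neg]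
    rw [hzpow]
    calc u = (u * P i3 j3 k3 l3) * (P i3 j3 k3 l3)⁻¹ := by group
    _ = -P i2 j2 k2 l2 * (P i3 j3 k3 l3)⁻¹ := by rw [hu']
    _ = -(P i2 j2 k2 l2 * (P i3 j3 k3 l3)⁻¹) := by
      apply Units.ext
      simp [Units.val_neg, Units.val_mul]
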